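/- In the shot-noise Cox process setup, assume additionally that Φ is a simple point process and, for a fixed k ≥ 1: (a) almost surely E[Φ^{(k)}(A) | Λ] = ((T_Λ · μ)^{⊗k})(A) for every measurable A ⊆ X^k, where T_Λ · μ is the measure with density T_Λ with respect to μ (the factorial-moment property of a Poisson process, applied conditionally); and (b) the k-th moment measure of Λ satisfies E[Λ^{⊗k}(C)] = Σ_{𝒫} ((ι_𝒫)_* ν^{⊗|𝒫|})(C) for every measurable C ⊆ (X×(0,∞))^k, where ι_𝒫 maps a |𝒫|-tuple (z_J)_{J∈𝒫} to the k-tuple whose j-th coordinate is z_{J(j)}, J(j) being the block containing j (the moment-measure formula of a Poisson process with intensity ν). Then the k-th factorial moment measure of Φ is M_Φ^{(k)}(A) = ∫_A Σ_{𝒫} ∏_{J∈𝒫} η(x_J) μ^{⊗k}(dx₁ … dx_k) for every measurable A ⊆ X^k. -/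

import Mathlib

open MeasureTheory ProbabilityTheory Filter
open scoped ENNReal NNReal Topology

/-- `expNeg t = e^{-t}` for `t ∈ [0,∞]`, with `expNeg ∞ = 0`. -/
noncomputable def expNeg (t : ENNReal) : ENNReal :=
  if t = ⊤ then 0 else ENNReal.ofReal (Real.exp (-t.toReal))

/-- The set `D_k` of `k`-tuples with pairwise distinct coordinates. -/
def distinctTuples (X : Type*) (k : ℕ) : Set (Fin k → X) :=
  {t : Fin k → X | Function.Injective t}

lemma expNeg_zero : expNeg 0 = 1 := by simp [expNeg]

lemma expNeg_top : expNeg ⊤ = 0 := by simp [expNeg]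

lemma expNeg_le_one (t : ENNReal) : expNeg t ≤ 1 := by
  unfold expNeg
  split
  · exact zero_le_one
  · rw [show (1 : ENNReal) = ENNReal.ofReal 1 by simp]
    exact ENNReal.ofReal_le_ofReal (by
      rw [Real.exp_le_one_iff]
      simp [ENNReal.toReal_nonneg])

section PiProd

variable {Z : Type*} [MeasurableSpace Z]

lemma lintegral_fin_pi_prod (m : Measure Z) [SigmaFinite m] :
    ∀ (n : ℕ) (f : Fin n → Z → ℝ≥0∞), (∀ i, Measurable (f i)) →
      ∫⁻ x, ∏ i, f i (x i) ∂(Measure.pi fun _ : Fin n => m) = ∏ i, ∫⁻ z, f i z ∂m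
  | 0, f, _ => by
    simp [Measure.pi_univ]
  | n + 1, f, hf => by
    have e := measurePreserving_piFinSuccAbove (fun _ : Fin (n + 1) => m) 0
    set g : Z × (Fin n → Z) → ℝ≥0∞ :=
      fun p => f 0 p.1 * ∏ i : Fin n, f i.succ (p.2 i) with hg
    have hgm : Measurable g := by
      apply Measurable.mul
      · exact (hf 0).comp measurable_fst
      · exact Finset.measurable_prod _ fun i _ =>
          (hf i.succ).comp ((measurable_pi_apply i).comp measurable_snd)
    have h1 : ∀ x : Fin (n + 1) → Z,
        (∏ i, f i (x i)) = g (MeasurableEquiv.piFinSuccAbove (fun _ => Z) 0 x) := by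
      intro x
      have : MeasurableEquiv.piFinSuccAbove (fun _ : Fin (n+1) => Z) 0 x
          = (x 0, fun j => x ((0 : Fin (n+1)).succAbove j)) := rfl
      rw [this, hg]
      simp only [Fin.succAbove_zero]
      exact Fin.prod_univ_succ _
    calc ∫⁻ x, ∏ i, f i (x i) ∂(Measure.pi fun _ : Fin (n + 1) => m)
        = ∫⁻ x, g (MeasurableEquiv.piFinSuccAbove (fun _ => Z) 0 x)
            ∂(Measure.pi fun _ : Fin (n + 1) => m) := lintegral_congr h1
      _ = ∫⁻ p, g p ∂(m.prod (Measure.pi fun _ : Fin n => m)) := e.lintegral_comp hgm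
      _ = (∫⁻ z, f 0 z ∂m) * ∫⁻ w, ∏ i : Fin n, f i.succ (w i)
            ∂(Measure.pi fun _ : Fin n => m) := by
          exact lintegral_prod_mul (f := f 0)
            (g := fun w : Fin n → Z => ∏ i : Fin n, f i.succ (w i)) (hf 0).aemeasurable
            (Finset.measurable_prod _ fun i _ =>
              (hf i.succ).comp (measurable_pi_apply i)).aemeasurable
      _ = (∫⁻ z, f 0 z ∂m) * ∏ i : Fin n, ∫⁻ z, f i.succ z ∂m := by
          rw [lintegral_fin_pi_prod m n _ fun i => hf i.succ]
      _ = ∏ i, ∫⁻ z, f i z ∂m := (Fin.prod_univ_succ fun i => ∫⁻ z, f i z ∂m).symm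

lemma lintegral_pi_prod {ι : Type*} [Fintype ι] (m : Measure Z) [SigmaFinite m]
    (f : ι → Z → ℝ≥0∞) (hf : ∀ i, Measurable (f i)) :
    ∫⁻ x, ∏ i, f i (x i) ∂(Measure.pi fun _ : ι => m) = ∏ i, ∫⁻ z, f i z ∂m := by
  set e : Fin (Fintype.card ι) ≃ ι := (Fintype.equivFin ι).symm
  have h := measurePreserving_piCongrLeft (fun _ : ι => m) e
  have hmeas : Measurable fun x : ι → Z => ∏ i, f i (x i) :=
    Finset.measurable_prod _ fun i _ => (hf i).comp (measurable_pi_apply i)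
  rw [← h.lintegral_comp hmeas]
  have h2 : ∀ y : Fin (Fintype.card ι) → Z,
      (∏ i, f i ((MeasurableEquiv.piCongrLeft (fun _ => Z) e y) i))
        = ∏ j, f (e j) (y j) := by
    intro y
    rw [← Equiv.prod_comp e]
    refine Finset.prod_congr rfl fun j _ => ?_
    congr 1
    rw [MeasurableEquiv.coe_piCongrLeft]
    exact Equiv.piCongrLeft_apply_apply (fun _ => Z) e y j
  calc ∫⁻ y, (∏ i, f i ((MeasurableEquiv.piCongrLeft (fun _ => Z) e y) i))
        ∂(Measure.pi fun _ : Fin (Fintype.card ι) => m)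
      = ∫⁻ y, ∏ j, f (e j) (y j) ∂(Measure.pi fun _ : Fin (Fintype.card ι) => m) :=
        lintegral_congr h2
    _ = ∏ j, ∫⁻ z, f (e j) z ∂m :=
        lintegral_fin_pi_prod m _ _ fun j => hf (e j)
    _ = ∏ i, ∫⁻ z, f i z ∂m := Equiv.prod_comp e fun i => ∫⁻ z, f i z ∂m

lemma pi_withDensity {ι : Type*} [Fintype ι] (m : Measure Z) [SigmaFinite m]
    (f : Z → ℝ≥0∞) (hf : Measurable f) (hfin : ∀ᵐ y ∂m, f y ≠ ⊤) :
    Measure.pi (fun _ : ι => m.withDensity f)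
      = (Measure.pi fun _ : ι => m).withDensity fun t => ∏ i, f (t i) := by
  haveI : SigmaFinite (m.withDensity f) := SigmaFinite.withDensity_of_ne_top hfin
  refine (Measure.pi_eq (μ := fun _ : ι => m.withDensity f)
    (μ' := (Measure.pi fun _ : ι => m).withDensity fun t => ∏ i, f (t i))
    fun s hs => ?_).symm.symm
  rw [withDensity_apply _ (MeasurableSet.univ_pi hs)]
  have : ∫⁻ t in Set.pi Set.univ s, (∏ i, f (t i)) ∂(Measure.pi fun _ : ι => m)
      = ∫⁻ t, ∏ i, ((s i).indicator f) (t i) ∂(Measure.pi fun _ : ι => m) := by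
    rw [← lintegral_indicator (MeasurableSet.univ_pi hs)]
    refine lintegral_congr fun t => ?_
    by_cases ht : t ∈ Set.pi Set.univ s
    · rw [Set.indicator_of_mem ht]
      exact Finset.prod_congr rfl fun i _ =>
        (Set.indicator_of_mem (ht i (Set.mem_univ i)) f).symm
    · rw [Set.indicator_of_notMem ht]
      have hex : ∃ i, t i ∉ s i := by simpa [Set.mem_pi] using ht
      obtain ⟨i, hi⟩ := hex
      exact (Finset.prod_eq_zero (Finset.mem_univ i)
        (Set.indicator_of_notMem hi f)).symm
  rw [this, lintegral_pi_prod m _ fun i => hf.indicator (hs i)]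
  exact Finset.prod_congr rfl fun i _ => by
    rw [withDensity_apply _ (hs i), lintegral_indicator (hs i)]

end PiProd

section Kern

variable {Ω Z : Type*} [MeasurableSpace Ω] [MeasurableSpace Z]

lemma sigmaFinite_of_exhaustion (m : Measure Z) (S : ℕ → Set Z)
    (hcov : ⋃ n, S n = Set.univ) (hfin : ∀ n, m (S n) ≠ ⊤) : SigmaFinite m :=
  ⟨⟨⟨S, fun _ => trivial, fun n => (hfin n).lt_top, hcov⟩⟩⟩

lemma ennreal_mem_Ico_iff (v : ℝ≥0∞) (hv : v ≠ ⊤) (mm : ℕ) :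
    v ∈ Set.Ico (mm : ℝ≥0∞) ((mm : ℝ≥0∞) + 1) ↔ mm = ⌊v.toReal⌋₊ := by
  lift v to ℝ≥0 using hv
  rw [Set.mem_Ico, eq_comm, Nat.floor_eq_iff (by positivity)]
  constructor
  · rintro ⟨h1, h2⟩
    constructor
    · exact_mod_cast h1
    · exact_mod_cast h2
  · rintro ⟨h1, h2⟩
    constructor
    · exact_mod_cast h1
    · exact_mod_cast h2

lemma isSFiniteKernel_of_exhaustion (K : Kernel Ω Z) (S : ℕ → Set Z)
    (hS : ∀ n, MeasurableSet (S n)) (hcov : ⋃ n, S n = Set.univ)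
    (hfin : ∀ ω n, K ω (S n) ≠ ⊤) : IsSFiniteKernel K := by
  classical
  set D : ℕ → Set Z := disjointed S with hD
  have hDmeas : ∀ n, MeasurableSet (D n) := MeasurableSet.disjointed hS
  have hDsub : ∀ n, D n ⊆ S n := fun n => disjointed_subset S n
  have hDdisj : Pairwise (Function.onFun Disjoint D) := disjoint_disjointed S
  have hDcov : ⋃ n, D n = Set.univ := by rw [hD, iUnion_disjointed]; exact hcov
  have hDfin : ∀ ω n, K ω (D n) ≠ ⊤ := fun ω n =>
    ne_top_of_le_ne_top (hfin ω n) (measure_mono (hDsub n))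
  have hKDmeas : ∀ n, Measurable fun ω => K ω (D n) := fun n =>
    K.measurable_coe (hDmeas n)
  set E : ℕ × ℕ → Set Ω := fun p =>
    (fun ω => K ω (D p.1)) ⁻¹' Set.Ico (p.2 : ℝ≥0∞) ((p.2 : ℝ≥0∞) + 1) with hE
  have hEmeas : ∀ p, MeasurableSet (E p) := fun p => (hKDmeas p.1) measurableSet_Ico
  set F : ℕ × ℕ → Ω → Measure Z :=
    fun p ω => if ω ∈ E p then (K ω).restrict (D p.1) else 0 with hF
  have hFmeas : ∀ p, Measurable (F p) := by
    intro p
    apply Measure.measurable_of_measurable_coe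
    intro s hs
    have heq : (fun ω => F p ω s) = (E p).indicator (fun ω => K ω (s ∩ D p.1)) := by
      funext ω
      by_cases h : ω ∈ E p <;>
        simp [hF, h, Measure.restrict_apply hs, Set.indicator_of_mem,
          Set.indicator_of_notMem]
    rw [heq]
    exact (K.measurable_coe (hs.inter (hDmeas p.1))).indicator (hEmeas p)
  set κs : ℕ × ℕ → Kernel Ω Z := fun p => ⟨F p, hFmeas p⟩ with hκs
  have hκsapp : ∀ p ω, κs p ω = F p ω := fun p ω => rfl
  have hκsfin : ∀ p, IsFiniteKernel (κs p) := by
    intro p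
    refine ⟨⟨(p.2 : ℝ≥0∞) + 1, by simp [ENNReal.add_lt_top], fun ω => ?_⟩⟩
    rw [hκsapp]
    by_cases h : ω ∈ E p
    · simp only [hF, if_pos h, Measure.restrict_apply MeasurableSet.univ, Set.univ_inter]
      exact h.2.le
    · simp [hF, if_neg h]
  have hsum : K = Kernel.sum κs := by
    refine Kernel.ext fun ω => ?_
    refine Measure.ext fun s hs => ?_
    rw [Kernel.sum_apply' κs ω hs]
    have hterm : ∀ p : ℕ × ℕ, κs p ω s =
        if K ω (D p.1) ∈ Set.Ico (p.2 : ℝ≥0∞) ((p.2 : ℝ≥0∞) + 1)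
        then K ω (s ∩ D p.1) else 0 := by
      intro p
      rw [hκsapp]
      by_cases h : ω ∈ E p
      · have h' : (K ω) (D p.1) ∈ Set.Ico (p.2 : ℝ≥0∞) ((p.2 : ℝ≥0∞) + 1) := h
        simp only [hF, if_pos h, Measure.restrict_apply hs]
        rw [if_pos h']
      · have h' : (K ω) (D p.1) ∉ Set.Ico (p.2 : ℝ≥0∞) ((p.2 : ℝ≥0∞) + 1) := h
        simp only [hF, if_neg h]
        rw [if_neg h']
        simp
    simp_rw [hterm]
    rw [ENNReal.tsum_prod (f := fun n m : ℕ =>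
      if K ω (D n) ∈ Set.Ico (m : ℝ≥0∞) ((m : ℝ≥0∞) + 1)
      then K ω (s ∩ D n) else 0)]
    have hinner : ∀ n : ℕ, (∑' m : ℕ,
        if K ω (D n) ∈ Set.Ico (m : ℝ≥0∞) ((m : ℝ≥0∞) + 1)
        then K ω (s ∩ D n) else 0) = K ω (s ∩ D n) := by
      intro n
      rw [tsum_eq_single ⌊(K ω (D n)).toReal⌋₊]
      · rw [if_pos (((ennreal_mem_Ico_iff _ (hDfin ω n) _).mpr rfl))]
      · intro m hm
        rw [if_neg]
        intro hmem
        exact hm ((ennreal_mem_Ico_iff _ (hDfin ω n) m).mp hmem)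
    simp_rw [hinner]
    have hre : K ω s = K ω (⋃ n, s ∩ D n) := by
      rw [← Set.inter_iUnion, hDcov, Set.inter_univ]
    rw [hre]
    exact measure_iUnion
      (fun i j hij => (hDdisj hij).mono Set.inter_subset_right Set.inter_subset_right)
      (fun n => hs.inter (hDmeas n))
  rw [hsum]
  exact Kernel.isSFiniteKernel_sum (hκs := fun p => by
    haveI := hκsfin p; infer_instance)

noncomputable def piKernel (K : Kernel Ω Z) : (n : ℕ) → Kernel Ω (Fin n → Z)
  | 0 => Kernel.const Ω (Measure.pi fun _ : Fin 0 => (0 : Measure Z))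
  | n + 1 => Kernel.map (K ×ₖ piKernel K n)
      (MeasurableEquiv.piFinSuccAbove (fun _ : Fin (n + 1) => Z) 0).symm

lemma piKernel_isSFinite (K : Kernel Ω Z) [IsSFiniteKernel K] :
    ∀ n, IsSFiniteKernel (piKernel K n)
  | 0 => by unfold piKernel; infer_instance
  | n + 1 => by
    unfold piKernel
    haveI := piKernel_isSFinite K n
    infer_instance

lemma piKernel_apply (K : Kernel Ω Z) [IsSFiniteKernel K] (hσ : ∀ ω, SigmaFinite (K ω)) :
    ∀ n ω, piKernel K n ω = Measure.pi (fun _ : Fin n => K ω)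
  | 0, ω => by
    haveI := hσ ω
    unfold piKernel
    rw [Kernel.const_apply]
    refine (Measure.pi_eq (μ := fun _ : Fin 0 => K ω)
      (μ' := Measure.pi fun _ : Fin 0 => (0 : Measure Z)) fun s hs => ?_).symm
    simp [Measure.pi_pi]
  | n + 1, ω => by
    haveI := hσ ω
    haveI := piKernel_isSFinite K n
    unfold piKernel
    rw [Kernel.map_apply _ (MeasurableEquiv.measurable _), Kernel.prod_apply,
      piKernel_apply K hσ n ω]
    exact (MeasurePreserving.symm _
      (measurePreserving_piFinSuccAbove (fun _ : Fin (n + 1) => K ω) 0)).map_eq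

lemma measurable_lintegral_piKernel (K : Kernel Ω Z) [IsSFiniteKernel K] (n : ℕ)
    {g : (Fin n → Z) → ℝ≥0∞} (hg : Measurable g) :
    Measurable fun ω => ∫⁻ z, g z ∂(piKernel K n ω) := by
  haveI := piKernel_isSFinite K n
  exact Measurable.lintegral_kernel_prod_right' (κ := piKernel K n)
    (hg.comp measurable_snd)

lemma ae_finite_of_laplace (P : Measure Ω) [IsProbabilityMeasure P] (ν : Measure Z)
    (Λ : Ω → Measure Z) (hΛmeas : Measurable Λ)
    (hΛ : ∀ h : Z → ENNReal, Measurable h →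
      ∫⁻ ω, expNeg (∫⁻ z, h z ∂(Λ ω)) ∂P = expNeg (∫⁻ z, (1 - expNeg (h z)) ∂ν))
    (s : Set Z) (hs : MeasurableSet s) (hνs : ν s ≠ ⊤) :
    ∀ᵐ ω ∂P, Λ ω s ≠ ⊤ := by
  set G : Set Ω := {ω | Λ ω s ≠ ⊤} with hG
  have hGmeas : MeasurableSet G := by
    have : Measurable fun ω => Λ ω s := (Measure.measurable_coe hs).comp hΛmeas
    exact this (measurableSet_singleton ⊤) |>.compl
  have hbound : ∀ c : ℝ, 0 < c →
      expNeg ((1 - expNeg (ENNReal.ofReal c)) * ν s) ≤ P G := by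
    intro c hc
    set h : Z → ℝ≥0∞ := s.indicator fun _ => ENNReal.ofReal c with hh
    have hhm : Measurable h := measurable_const.indicator hs
    have hint : ∀ ω, ∫⁻ z, h z ∂(Λ ω) = ENNReal.ofReal c * Λ ω s := fun ω =>
      lintegral_indicator_const hs _
    have hrhs : ∫⁻ z, (1 - expNeg (h z)) ∂ν = (1 - expNeg (ENNReal.ofReal c)) * ν s := by
      have : (fun z => 1 - expNeg (h z))
          = s.indicator fun _ => (1 - expNeg (ENNReal.ofReal c)) := by
        funext z
        by_cases hz : z ∈ s
        · simp [hh, Set.indicator_of_mem hz]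
        · simp [hh, Set.indicator_of_notMem hz, expNeg_zero]
      rw [this, lintegral_indicator_const hs]
    have hkey := hΛ h hhm
    rw [hrhs] at hkey
    rw [← hkey]
    have hle : ∀ ω, expNeg (∫⁻ z, h z ∂(Λ ω)) ≤ G.indicator (fun _ => 1) ω := by
      intro ω
      by_cases hω : ω ∈ G
      · rw [Set.indicator_of_mem hω]
        exact expNeg_le_one _
      · rw [Set.indicator_of_notMem hω]
        have : Λ ω s = ⊤ := by
          by_contra hcon
          exact hω hcon
        rw [hint, this, ENNReal.mul_top (by simpa [ENNReal.ofReal_eq_zero, not_le] using hc)]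
        simp [expNeg_top]
    calc ∫⁻ ω, expNeg (∫⁻ z, h z ∂(Λ ω)) ∂P
        ≤ ∫⁻ ω, G.indicator (fun _ => 1) ω ∂P := lintegral_mono hle
      _ = P G := by rw [lintegral_indicator_const hGmeas, one_mul]
  have htend : Tendsto (fun n : ℕ =>
      expNeg ((1 - expNeg (ENNReal.ofReal (1 / (n + 1)))) * ν s)) atTop (𝓝 1) := by
    have h0 : Tendsto (fun n : ℕ => 1 / ((n : ℝ) + 1)) atTop (𝓝 0) :=
      tendsto_one_div_add_atTop_nhds_zero_nat
    have h1 : ∀ n : ℕ, (1 - expNeg (ENNReal.ofReal (1 / ((n : ℝ) + 1)))) * ν s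
        = ENNReal.ofReal (1 - Real.exp (-(1 / ((n : ℝ) + 1)))) * ν s := by
      intro n
      congr 1
      have hge : (0:ℝ) ≤ 1 / ((n : ℝ) + 1) := by positivity
      rw [show expNeg (ENNReal.ofReal (1 / ((n : ℝ) + 1)))
          = ENNReal.ofReal (Real.exp (-(1 / ((n : ℝ) + 1)))) by
        unfold expNeg
        rw [if_neg ENNReal.ofReal_ne_top, ENNReal.toReal_ofReal hge]]
      rw [← ENNReal.ofReal_one, ← ENNReal.ofReal_sub _ (Real.exp_nonneg _)]
    simp_rw [h1]
    have h2 : Tendsto (fun n : ℕ =>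
        ENNReal.ofReal (1 - Real.exp (-(1 / ((n : ℝ) + 1)))) * ν s) atTop (𝓝 0) := by
      have hr : Tendsto (fun n : ℕ => 1 - Real.exp (-(1 / ((n : ℝ) + 1)))) atTop (𝓝 0) := by
        have := ((Real.continuous_exp.comp continuous_neg).tendsto 0).comp h0
        have h3 : Tendsto (fun n : ℕ => Real.exp (-(1 / ((n : ℝ) + 1)))) atTop (𝓝 1) := by
          simpa [Function.comp_def] using this
        simpa using (tendsto_const_nhds (x := (1:ℝ))).sub h3
      have := ENNReal.Tendsto.mul_const (ENNReal.tendsto_ofReal hr) (Or.inr hνs)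
      simpa using this
    have hfin : ∀ n : ℕ, (ENNReal.ofReal (1 - Real.exp (-(1 / ((n : ℝ) + 1)))) * ν s) ≠ ⊤ :=
      fun n => ENNReal.mul_ne_top ENNReal.ofReal_ne_top hνs
    have htr : Tendsto (fun n : ℕ =>
        (ENNReal.ofReal (1 - Real.exp (-(1 / ((n : ℝ) + 1)))) * ν s).toReal) atTop (𝓝 0) := by
      have h4 := (ENNReal.tendsto_toReal (ENNReal.zero_ne_top)).comp h2
      rw [ENNReal.toReal_zero] at h4
      exact h4
    have : Tendsto (fun n : ℕ => ENNReal.ofReal (Real.exp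
        (-(ENNReal.ofReal (1 - Real.exp (-(1 / ((n : ℝ) + 1)))) * ν s).toReal))) atTop (𝓝 1) := by
      have hexp : Tendsto (fun n : ℕ => Real.exp
          (-(ENNReal.ofReal (1 - Real.exp (-(1 / ((n : ℝ) + 1)))) * ν s).toReal)) atTop (𝓝 1) := by
        have h5 := ((Real.continuous_exp.comp continuous_neg).tendsto 0).comp htr
        simp only [Function.comp_def, neg_zero, Real.exp_zero] at h5
        exact h5
      have h6 := ENNReal.tendsto_ofReal hexp
      simpa using h6
    refine Tendsto.congr (fun n => ?_) this
    unfold expNeg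
    rw [if_neg (hfin n)]
  have h1le : (1 : ℝ≥0∞) ≤ P G := by
    refine le_of_tendsto htend (Eventually.of_forall fun n =>
      hbound (1 / ((n : ℝ) + 1)) (by positivity))
  have hPG : P G = 1 := le_antisymm prob_le_one h1le
  rw [ae_iff]
  have : {ω | ¬ Λ ω s ≠ ⊤} = Gᶜ := by
    ext ω; simp [hG]
  rw [this, measure_compl hGmeas (measure_ne_top P G), hPG, measure_univ, tsub_self]

end Kern

lemma prod_subtype_mem {α M : Type*} [CommMonoid M] (s : Finset α)
    (f : {x // x ∈ s} → M) (g : α → M)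
    (h : ∀ (x : α) (hx : x ∈ s), f ⟨x, hx⟩ = g x) :
    ∏ i : {x // x ∈ s}, f i = ∏ x ∈ s, g x := by
  rw [Finset.univ_eq_attach, Finset.prod_congr rfl (fun x _ => h x.1 x.2)]
  exact Finset.prod_attach s g

/-- `k`-th factorial moment measure of a shot-noise Cox process.
Under the conditional factorial-moment property (a) and the Poisson moment-measure
formula (b) for the directing process `Λ`, the `k`-th factorial moment measure of the
shot-noise Cox process `Φ` is
`M_Φ^{(k)}(A) = ∫_A Σ_pt ∏_{J∈pt} η(x_J) μ^{⊗k}(dx)`,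
the sum ranging over all set partitions `pt` of `{1,…,k}`. -/
theorem sncp_factorial_moment_measure
    {Ω X : Type*} [MeasurableSpace Ω] [MeasurableSpace X]
    (P : Measure Ω) [IsProbabilityMeasure P]
    (μ : Measure X) [SigmaFinite μ]
    (ν : Measure (X × NNReal)) [SigmaFinite ν] (hν0 : ν {z | z.2 = 0} = 0)
    (κ : X → X → ENNReal) (hκ : Measurable (Function.uncurry κ))
    (hκ1 : ∀ θ : X, ∫⁻ y, κ y θ ∂μ = 1)
    (Λ : Ω → Measure (X × NNReal)) (hΛmeas : Measurable Λ)
    -- Poisson Laplace functional of the directing process `Λ`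
    (hΛ : ∀ h : X × NNReal → ENNReal, Measurable h →
      ∫⁻ ω, expNeg (∫⁻ z, h z ∂(Λ ω)) ∂P = expNeg (∫⁻ z, (1 - expNeg (h z)) ∂ν))
    (hTfin : ∀ᵐ ω ∂P, ∀ᵐ y ∂μ, (∫⁻ z, (z.2 : ENNReal) * κ y z.1 ∂(Λ ω)) ≠ ⊤)
    (Φ : Ω → Measure X) (hΦmeas : Measurable Φ)
    -- `Φ` is conditionally Poisson given `Λ`, with intensity `T_Λ · μ`
    (hcond : ∀ f : X → ENNReal, Measurable f →
      ∀ G : Measure (X × NNReal) → ENNReal, Measurable G →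
      ∫⁻ ω, expNeg (∫⁻ y, f y ∂(Φ ω)) * G (Λ ω) ∂P
        = ∫⁻ ω, expNeg (∫⁻ y, (1 - expNeg (f y))
            * (∫⁻ z, (z.2 : ENNReal) * κ y z.1 ∂(Λ ω)) ∂μ) * G (Λ ω) ∂P)
    -- `Φ` is a simple point process
    (hpp : ∀ᵐ ω ∂P, ∀ B : Set X, MeasurableSet B → Φ ω B = ⊤ ∨ ∃ n : ℕ, Φ ω B = n)
    (hsimple : ∀ᵐ ω ∂P, ∀ y : X, Φ ω {y} ≤ 1)
    (k : ℕ) (hk : 1 ≤ k)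
    -- (a) conditional factorial-moment property of the Poisson process `Φ` given `Λ`
    (ha : ∀ A : Set (Fin k → X), MeasurableSet A →
      ∀ G : Measure (X × NNReal) → ENNReal, Measurable G →
      ∫⁻ ω, ((Measure.pi fun _ : Fin k => Φ ω).restrict (distinctTuples X k)) A
          * G (Λ ω) ∂P
        = ∫⁻ ω, (Measure.pi fun _ : Fin k =>
              μ.withDensity (fun y => ∫⁻ z, (z.2 : ENNReal) * κ y z.1 ∂(Λ ω))) A
            * G (Λ ω) ∂P)
    -- (b) moment-measure formula of the Poisson process `Λ` with intensity `ν`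
    (hb : ∀ C : Set (Fin k → X × NNReal), MeasurableSet C →
      ∫⁻ ω, (Measure.pi fun _ : Fin k => Λ ω) C ∂P
        = ∑ pt : Finpartition (Finset.univ : Finset (Fin k)),
            (Measure.map
              (fun (z : {J // J ∈ pt.parts} → X × NNReal) (j : Fin k) =>
                z ⟨pt.part j, pt.part_mem.mpr (Finset.mem_univ j)⟩)
              (Measure.pi fun _ : {J // J ∈ pt.parts} => ν)) C) :
    ∀ A : Set (Fin k → X), MeasurableSet A →
      ∫⁻ ω, ((Measure.pi fun _ : Fin k => Φ ω).restrict (distinctTuples X k)) A ∂P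
        = ∫⁻ t in A,
            ∑ pt : Finpartition (Finset.univ : Finset (Fin k)),
              ∏ J ∈ pt.parts,
                ∫⁻ z, (z.2 : ENNReal) ^ J.card * ∏ j ∈ J, κ (t j) z.1 ∂ν
          ∂(Measure.pi fun _ : Fin k => μ) := by
  classical
  intro A hA
  -- the good set of `ω` where `Λ ω` is manifestly σ-finite
  have hfinΛ : ∀ n : ℕ, ∀ᵐ ω ∂P, Λ ω (spanningSets ν n) ≠ ⊤ := fun n =>
    ae_finite_of_laplace P ν Λ hΛmeas hΛ _ (measurableSet_spanningSets ν n)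
      (measure_spanningSets_lt_top ν n).ne
  set Good : Set Ω := {ω | ∀ n, Λ ω (spanningSets ν n) ≠ ⊤} with hGood
  have hGoodMeas : MeasurableSet Good := by
    have hn : ∀ n : ℕ, MeasurableSet {ω | Λ ω (spanningSets ν n) ≠ ⊤} := fun n =>
      (((Measure.measurable_coe (measurableSet_spanningSets ν n)).comp hΛmeas)
        (measurableSet_singleton ⊤)).compl
    have : Good = ⋂ n, {ω | Λ ω (spanningSets ν n) ≠ ⊤} := by
      ext ω; simp [hGood]
    rw [this]
    exact MeasurableSet.iInter hn
  have hGoodae : ∀ᵐ ω ∂P, ω ∈ Good := by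
    have := ae_all_iff.mpr hfinΛ
    filter_upwards [this] with ω hω
    exact hω
  -- the modified directing measure
  set Λ' : Ω → Measure (X × NNReal) := Good.piecewise Λ (fun _ => 0) with hΛ'
  have hΛ'meas : Measurable Λ' := Measurable.piecewise hGoodMeas hΛmeas measurable_const
  have hΛ'good : ∀ ω ∈ Good, Λ' ω = Λ ω := fun ω h => Set.piecewise_eq_of_mem _ _ _ h
  have hΛ'fin : ∀ ω n, Λ' ω (spanningSets ν n) ≠ ⊤ := by
    intro ω n
    by_cases h : ω ∈ Good
    · rw [hΛ'good ω h]; exact h n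
    · rw [hΛ', Set.piecewise_eq_of_notMem _ _ _ h]; simp
  have hσ : ∀ ω, SigmaFinite (Λ' ω) := fun ω =>
    sigmaFinite_of_exhaustion _ _ (iUnion_spanningSets ν) (hΛ'fin ω)
  set K : Kernel Ω (X × NNReal) := ⟨Λ', hΛ'meas⟩ with hK
  have hKapp : ∀ ω, K ω = Λ' ω := fun _ => rfl
  haveI hKsf : IsSFiniteKernel K :=
    isSFiniteKernel_of_exhaustion K _ (measurableSet_spanningSets ν)
      (iUnion_spanningSets ν) (fun ω n => hΛ'fin ω n)
  have hσK : ∀ ω, SigmaFinite (K ω) := hσ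
  have hpiK : ∀ ω, piKernel K k ω = Measure.pi (fun _ : Fin k => Λ' ω) :=
    fun ω => piKernel_apply K hσK k ω
  -- the (jointly measurable) intensity field
  set T : Ω → X → ℝ≥0∞ := fun ω y => ∫⁻ z, (z.2 : ℝ≥0∞) * κ y z.1 ∂(Λ' ω) with hT
  have hTmeas : Measurable (fun p : Ω × X => T p.1 p.2) := by
    have h1 : Measurable fun q : (Ω × X) × (X × NNReal) =>
        ((q.2.2 : ℝ≥0∞)) * κ q.1.2 q.2.1 := by
      apply Measurable.mul
      · exact measurable_coe_nnreal_ennreal.comp (measurable_snd.comp measurable_snd)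
      · exact hκ.comp ((measurable_snd.comp measurable_fst).prodMk
          (measurable_fst.comp measurable_snd))
    exact Measurable.lintegral_kernel_prod_right'
      (κ := K.comap Prod.fst measurable_fst) h1
  -- extension of hypothesis (b) from sets to functions
  have hmeasfam : Measurable fun ω => Measure.pi (fun _ : Fin k => Λ' ω) := by
    have heq : (fun ω => Measure.pi (fun _ : Fin k => Λ' ω))
        = fun ω => piKernel K k ω := by
      funext ω; rw [hpiK ω]
    rw [heq]
    exact (piKernel K k).measurable
  have key : ∀ g : (Fin k → X × NNReal) → ℝ≥0∞, Measurable g →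
      ∫⁻ ω, ∫⁻ z, g z ∂(Measure.pi fun _ : Fin k => Λ' ω) ∂P
        = ∑ pt : Finpartition (Finset.univ : Finset (Fin k)),
            ∫⁻ z, g (fun j => z ⟨pt.part j, pt.part_mem.mpr (Finset.mem_univ j)⟩)
              ∂(Measure.pi fun _ : {J // J ∈ pt.parts} => ν) := by
    intro g hg
    have hbind : P.bind (fun ω => Measure.pi fun _ : Fin k => Λ' ω)
        = ∑ pt : Finpartition (Finset.univ : Finset (Fin k)),
            Measure.map
              (fun (z : {J // J ∈ pt.parts} → X × NNReal) (j : Fin k) =>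
                z ⟨pt.part j, pt.part_mem.mpr (Finset.mem_univ j)⟩)
              (Measure.pi fun _ : {J // J ∈ pt.parts} => ν) := by
      refine Measure.ext fun C hC => ?_
      rw [Measure.bind_apply hC hmeasfam.aemeasurable]
      have hcongr : ∫⁻ ω, (Measure.pi fun _ : Fin k => Λ' ω) C ∂P
          = ∫⁻ ω, (Measure.pi fun _ : Fin k => Λ ω) C ∂P := by
        refine lintegral_congr_ae (hGoodae.mono fun ω hω => ?_)
        have hωeq : Λ' ω = Λ ω := hΛ'good ω hω
        simp only [hωeq]
      rw [hcongr, hb C hC, Measure.finset_sum_apply]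
    calc ∫⁻ ω, ∫⁻ z, g z ∂(Measure.pi fun _ : Fin k => Λ' ω) ∂P
        = ∫⁻ z, g z ∂(P.bind fun ω => Measure.pi fun _ : Fin k => Λ' ω) :=
          (Measure.lintegral_bind hmeasfam.aemeasurable hg.aemeasurable).symm
      _ = ∑ pt : Finpartition (Finset.univ : Finset (Fin k)),
            ∫⁻ z, g z ∂(Measure.map
              (fun (z : {J // J ∈ pt.parts} → X × NNReal) (j : Fin k) =>
                z ⟨pt.part j, pt.part_mem.mpr (Finset.mem_univ j)⟩)
              (Measure.pi fun _ : {J // J ∈ pt.parts} => ν)) := by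
          rw [hbind]
          exact lintegral_finset_sum_measure _ _ _
      _ = ∑ pt : Finpartition (Finset.univ : Finset (Fin k)),
            ∫⁻ z, g (fun j => z ⟨pt.part j, pt.part_mem.mpr (Finset.mem_univ j)⟩)
              ∂(Measure.pi fun _ : {J // J ∈ pt.parts} => ν) := by
          refine Finset.sum_congr rfl fun pt _ => ?_
          exact lintegral_map hg
            (measurable_pi_lambda _ fun j => measurable_pi_apply _)
  -- per-partition computation
  have hpt : ∀ (t : Fin k → X) (pt : Finpartition (Finset.univ : Finset (Fin k))),
      ∫⁻ z, (∏ j, (((z ⟨pt.part j, pt.part_mem.mpr (Finset.mem_univ j)⟩).2 : ℝ≥0∞)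
          * κ (t j) (z ⟨pt.part j, pt.part_mem.mpr (Finset.mem_univ j)⟩).1))
        ∂(Measure.pi fun _ : {J // J ∈ pt.parts} => ν)
      = ∏ J ∈ pt.parts, ∫⁻ z, (z.2 : ℝ≥0∞) ^ J.card * ∏ j ∈ J, κ (t j) z.1 ∂ν := by
    intro t pt
    set h : {J // J ∈ pt.parts} → (X × NNReal) → ℝ≥0∞ := fun i w =>
      ((w.2 : ℝ≥0∞)) ^ (i : Finset (Fin k)).card
        * ∏ j ∈ (i : Finset (Fin k)), κ (t j) w.1 with hh
    have hpoint : ∀ z : {J // J ∈ pt.parts} → X × NNReal,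
        (∏ j, (((z ⟨pt.part j, pt.part_mem.mpr (Finset.mem_univ j)⟩).2 : ℝ≥0∞)
            * κ (t j) (z ⟨pt.part j, pt.part_mem.mpr (Finset.mem_univ j)⟩).1))
          = ∏ i : {J // J ∈ pt.parts}, h i (z i) := by
      intro z
      have h1 : (Finset.univ : Finset (Fin k)) = pt.parts.biUnion id := pt.biUnion_parts.symm
      calc (∏ j : Fin k, (((z ⟨pt.part j, pt.part_mem.mpr (Finset.mem_univ j)⟩).2 : ℝ≥0∞)
              * κ (t j) (z ⟨pt.part j, pt.part_mem.mpr (Finset.mem_univ j)⟩).1))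
          = ∏ j ∈ pt.parts.biUnion id,
              (((z ⟨pt.part j, pt.part_mem.mpr (Finset.mem_univ j)⟩).2 : ℝ≥0∞)
              * κ (t j) (z ⟨pt.part j, pt.part_mem.mpr (Finset.mem_univ j)⟩).1) :=
            Finset.prod_congr h1 fun _ _ => rfl
        _ = ∏ J ∈ pt.parts, ∏ j ∈ id J,
              (((z ⟨pt.part j, pt.part_mem.mpr (Finset.mem_univ j)⟩).2 : ℝ≥0∞)
              * κ (t j) (z ⟨pt.part j, pt.part_mem.mpr (Finset.mem_univ j)⟩).1) :=
            Finset.prod_biUnion pt.supIndep.pairwiseDisjoint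
        _ = ∏ J ∈ pt.parts, (if hJ : J ∈ pt.parts
              then h ⟨J, hJ⟩ (z ⟨J, hJ⟩) else 1) := by
            refine Finset.prod_congr rfl fun J hJ => ?_
            rw [dif_pos hJ, hh]
            have hzz : ∀ j ∈ J,
                (z ⟨pt.part j, pt.part_mem.mpr (Finset.mem_univ j)⟩) = z ⟨J, hJ⟩ := by
              intro j hj
              congr 1
              exact Subtype.ext (pt.part_eq_of_mem hJ hj)
            simp only [id]
            rw [Finset.prod_congr rfl (fun j hj => by rw [hzz j hj])]
            rw [Finset.prod_mul_distrib, Finset.prod_const]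
        _ = ∏ i : {J // J ∈ pt.parts}, h i (z i) :=
            (prod_subtype_mem pt.parts (fun i => h i (z i)) (fun J =>
              if hJ : J ∈ pt.parts then h ⟨J, hJ⟩ (z ⟨J, hJ⟩) else 1)
              (fun J hJ => by
                show h ⟨J, hJ⟩ (z ⟨J, hJ⟩)
                  = if hJ' : J ∈ pt.parts then h ⟨J, hJ'⟩ (z ⟨J, hJ'⟩) else 1
                rw [dif_pos hJ])).symm
    rw [lintegral_congr hpoint]
    rw [lintegral_pi_prod ν h (fun i => by
      apply Measurable.mul
      · exact (measurable_coe_nnreal_ennreal.comp measurable_snd).pow_const _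
      · exact Finset.measurable_prod _ fun j _ =>
          hκ.comp (measurable_const.prodMk measurable_fst))]
    exact prod_subtype_mem pt.parts _ _ fun J hJ => rfl
  -- Step 1: apply (a) with G = 1
  have h1 := ha A hA (fun _ => 1) measurable_const
  simp only [mul_one] at h1
  rw [h1]
  -- Step 2: rewrite the conditional intensity measure
  have hstep2 : ∀ᵐ ω ∂P,
      (Measure.pi fun _ : Fin k =>
        μ.withDensity (fun y => ∫⁻ z, (z.2 : ENNReal) * κ y z.1 ∂(Λ ω))) A
      = ∫⁻ t in A, ∏ j, T ω (t j) ∂(Measure.pi fun _ : Fin k => μ) := by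
    filter_upwards [hGoodae, hTfin] with ω hω hfinT
    have hTeq : (fun y => ∫⁻ z, (z.2 : ENNReal) * κ y z.1 ∂(Λ ω)) = T ω := by
      funext y
      rw [hT]
      simp only
      rw [hΛ'good ω hω]
    rw [hTeq]
    have hTωmeas : Measurable (T ω) := hTmeas.comp measurable_prodMk_left
    have hTωfin : ∀ᵐ y ∂μ, T ω y ≠ ⊤ := by
      filter_upwards [hfinT] with y hy
      rw [hT]
      simp only
      rw [hΛ'good ω hω]
      exact hy
    rw [pi_withDensity μ (T ω) hTωmeas hTωfin, withDensity_apply _ hA]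
  rw [lintegral_congr_ae hstep2]
  -- Step 3: Tonelli
  have hswap : ∫⁻ ω, ∫⁻ t in A, ∏ j, T ω (t j)
        ∂(Measure.pi fun _ : Fin k => μ) ∂P
      = ∫⁻ t in A, ∫⁻ ω, ∏ j, T ω (t j) ∂P ∂(Measure.pi fun _ : Fin k => μ) := by
    have hum : Measurable (Function.uncurry fun ω (t : Fin k → X) => ∏ j, T ω (t j)) := by
      apply Finset.measurable_prod
      intro j _
      exact hTmeas.comp (measurable_fst.prodMk
        ((measurable_pi_apply j).comp measurable_snd))
    exact lintegral_lintegral_swap hum.aemeasurable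
  rw [hswap]
  -- Step 4: pointwise identification of the inner integral
  refine lintegral_congr fun t => ?_
  have hgt : Measurable (fun z : Fin k → X × NNReal =>
      ∏ j, ((z j).2 : ℝ≥0∞) * κ (t j) (z j).1) := by
    apply Finset.measurable_prod
    intro j _
    apply Measurable.mul
    · exact measurable_coe_nnreal_ennreal.comp (measurable_snd.comp (measurable_pi_apply j))
    · exact hκ.comp (measurable_const.prodMk
        (measurable_fst.comp (measurable_pi_apply j)))
  have e1 : ∀ ω, ∏ j, T ω (t j)
      = ∫⁻ z, ∏ j, ((z j).2 : ℝ≥0∞) * κ (t j) (z j).1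
          ∂(Measure.pi fun _ : Fin k => Λ' ω) := by
    intro ω
    haveI := hσ ω
    rw [lintegral_pi_prod (Λ' ω)
      (fun j => fun w => ((w.2 : ℝ≥0∞)) * κ (t j) w.1)
      (fun j => ((measurable_coe_nnreal_ennreal.comp measurable_snd).mul
        (hκ.comp (measurable_const.prodMk measurable_fst))))]
  rw [lintegral_congr e1, key _ hgt]
  exact Finset.sum_congr rfl fun pt _ => hpt t pt
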